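/- arXiv:0905.0044 — 5 statements merged into one kernel-verified Lean document; each statement's English description precedes it below -/
import Mathlib

section
/- If X ∈ ℂ^{m×n} has rank(X) ≤ r and Ψ is a set of at most r rank-one matrices, then ‖P_Ψ A* A X‖_F ≤ (1 + δ_r(A)) ‖X‖_F. -/
open scoped BigOperators Matrix

/-- Frobenius (trace) inner product on complex matrices: `⟪X, Y⟫ = tr(Yᴴ X)`. -/
noncomputable def frobInner {m n : ℕ} (X Y : Matrix (Fin m) (Fin n) ℂ) : ℂ :=
  (Yᴴ * X).trace

/-- Frobenius norm of a complex matrix. -/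
noncomputable def frobNorm {m n : ℕ} (X : Matrix (Fin m) (Fin n) ℂ) : ℝ :=
  Real.sqrt (∑ i, ∑ j, ‖X i j‖ ^ 2)

/-- Euclidean norm on `ℂ^p`. -/
noncomputable def eNorm {p : ℕ} (v : Fin p → ℂ) : ℝ :=
  Real.sqrt (∑ k, ‖v k‖ ^ 2)

/-- Hermitian inner product on `ℂ^p` (linear in the first argument). -/
noncomputable def eInner {p : ℕ} (u v : Fin p → ℂ) : ℂ :=
  ∑ k, (starRingEnd ℂ) (v k) * u k

/-- `A` satisfies the rank-`r` restricted isometry inequalities with constant `δ`: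
`(1-δ)‖X‖_F² ≤ ‖A X‖₂² ≤ (1+δ)‖X‖_F²` for all `X` with `rank X ≤ r`. -/
def RIPwith {m n p : ℕ} (A : Matrix (Fin m) (Fin n) ℂ →ₗ[ℂ] (Fin p → ℂ)) (r : ℕ) (δ : ℝ) : Prop :=
  ∀ X : Matrix (Fin m) (Fin n) ℂ, X.rank ≤ r →
    (1 - δ) * frobNorm X ^ 2 ≤ eNorm (A X) ^ 2 ∧ eNorm (A X) ^ 2 ≤ (1 + δ) * frobNorm X ^ 2

/-- `P` is the orthogonal projection onto the span of `S`
with respect to the Frobenius inner product. -/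
def IsOrthProjOn {m n : ℕ} (P : Matrix (Fin m) (Fin n) ℂ →ₗ[ℂ] Matrix (Fin m) (Fin n) ℂ)
    (S : Set (Matrix (Fin m) (Fin n) ℂ)) : Prop :=
  (∀ X, P (P X) = P X) ∧ LinearMap.range P = Submodule.span ℂ S ∧
    (∀ X Y, frobInner (P X) Y = frobInner X (P Y))

/-- `B` is the adjoint of `A` w.r.t. the Frobenius and Euclidean inner products. -/
def IsAdjoint {m n p : ℕ} (A : Matrix (Fin m) (Fin n) ℂ →ₗ[ℂ] (Fin p → ℂ))
    (B : (Fin p → ℂ) →ₗ[ℂ] Matrix (Fin m) (Fin n) ℂ) : Prop :=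
  ∀ X v, eInner (A X) v = frobInner X (B v)

lemma eNorm_nonneg {p : ℕ} (v : Fin p → ℂ) : 0 ≤ eNorm v :=
  Real.sqrt_nonneg _

lemma frobNorm_nonneg {m n : ℕ} (X : Matrix (Fin m) (Fin n) ℂ) : 0 ≤ frobNorm X :=
  Real.sqrt_nonneg _

lemma frobNorm_sq {m n : ℕ} (X : Matrix (Fin m) (Fin n) ℂ) :
    frobNorm X ^ 2 = ∑ i, ∑ j, ‖X i j‖ ^ 2 := by
  apply Real.sq_sqrt
  positivity

lemma frobInner_self {m n : ℕ} (Y : Matrix (Fin m) (Fin n) ℂ) :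
    frobInner Y Y = ((frobNorm Y ^ 2 : ℝ) : ℂ) := by
  rw [frobNorm_sq]
  simp only [frobInner, Matrix.trace, Matrix.diag_apply, Matrix.mul_apply,
    Matrix.conjTranspose_apply]
  rw [Finset.sum_comm]
  push_cast
  refine Finset.sum_congr rfl fun i _ => Finset.sum_congr rfl fun j _ => ?_
  rw [mul_comm]
  rw [show star (Y i j) = (starRingEnd ℂ) (Y i j) from rfl, Complex.mul_conj']

lemma frobInner_conj_symm {m n : ℕ} (X Y : Matrix (Fin m) (Fin n) ℂ) :
    frobInner X Y = starRingEnd ℂ (frobInner Y X) := by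
  unfold frobInner
  have : Yᴴ * X = (Xᴴ * Y)ᴴ := by simp [Matrix.conjTranspose_mul]
  rw [this, Matrix.trace_conjTranspose]
  rfl

lemma eInner_abs_le {p : ℕ} (u v : Fin p → ℂ) : ‖eInner u v‖ ≤ eNorm u * eNorm v := by
  set u' := (WithLp.equiv 2 (Fin p → ℂ)).symm u
  set v' := (WithLp.equiv 2 (Fin p → ℂ)).symm v
  have h1 : eInner u v = @inner ℂ _ _ v' u' := by
    simp [eInner, PiLp.inner_apply, u', v']
    exact Finset.sum_congr rfl fun _ _ => mul_comm _ _
  have h2 : eNorm u = ‖u'‖ := by rw [EuclideanSpace.norm_eq]; rfl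
  have h3 : eNorm v = ‖v'‖ := by rw [EuclideanSpace.norm_eq]; rfl
  rw [h1, h2, h3]
  calc ‖@inner ℂ _ _ v' u'‖ ≤ ‖v'‖ * ‖u'‖ := norm_inner_le_norm _ _
    _ = ‖u'‖ * ‖v'‖ := mul_comm _ _

lemma rank_add_le' {m n : ℕ} (A B : Matrix (Fin m) (Fin n) ℂ) :
    (A + B).rank ≤ A.rank + B.rank := by
  unfold Matrix.rank
  have h : LinearMap.range (A + B).mulVecLin ≤
      LinearMap.range A.mulVecLin ⊔ LinearMap.range B.mulVecLin := by
    rintro x ⟨v, rfl⟩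
    rw [Matrix.mulVecLin_add]
    exact Submodule.add_mem_sup ⟨v, rfl⟩ ⟨v, rfl⟩
  exact le_trans (Submodule.finrank_mono h)
    (Submodule.finrank_add_le_finrank_add_finrank _ _)

lemma rank_smul_le' {m n : ℕ} (c : ℂ) (A : Matrix (Fin m) (Fin n) ℂ) :
    (c • A).rank ≤ A.rank := by
  unfold Matrix.rank
  apply Submodule.finrank_mono
  rintro x ⟨v, rfl⟩
  exact ⟨c • v, by simp [Matrix.mulVecLin, Matrix.mulVec_smul, Matrix.smul_mulVec]⟩

lemma rank_sum_le' {m n : ℕ} {ι : Type*} (s : Finset ι) (g : ι → Matrix (Fin m) (Fin n) ℂ) :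
    (∑ i ∈ s, g i).rank ≤ ∑ i ∈ s, (g i).rank := by
  classical
  induction s using Finset.cons_induction with
  | empty => simp [Matrix.rank_zero]
  | cons a s ha ih =>
    rw [Finset.sum_cons, Finset.sum_cons]
    exact le_trans (rank_add_le' _ _) (add_le_add le_rfl ih)

/-- `‖P_Ψ A* A X‖_F ≤ (1 + δ_r(A)) ‖X‖_F` for `rank X ≤ r`. -/
theorem proj_adjoint_comp_bound {m n p r : ℕ} (A : Matrix (Fin m) (Fin n) ℂ →ₗ[ℂ] (Fin p → ℂ))
    (δ : ℝ) (hδ0 : 0 ≤ δ) (hA : RIPwith A r δ)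
    (Astar : (Fin p → ℂ) →ₗ[ℂ] Matrix (Fin m) (Fin n) ℂ) (hadj : IsAdjoint A Astar)
    (Ψ : Finset (Matrix (Fin m) (Fin n) ℂ)) (hΨ : ∀ ψ ∈ Ψ, ψ.rank = 1) (hcard : Ψ.card ≤ r)
    (P : Matrix (Fin m) (Fin n) ℂ →ₗ[ℂ] Matrix (Fin m) (Fin n) ℂ)
    (hP : IsOrthProjOn P (Ψ : Set (Matrix (Fin m) (Fin n) ℂ)))
    (X : Matrix (Fin m) (Fin n) ℂ) (hX : X.rank ≤ r) :
    frobNorm (P (Astar (A X))) ≤ (1 + δ) * frobNorm X := by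
  classical
  set Z := Astar (A X) with hZ
  set Y := P Z with hY
  obtain ⟨hidem, hrange, hsym⟩ := hP
  -- rank bound on Y
  have hYrank : Y.rank ≤ r := by
    have hmem : Y ∈ Submodule.span ℂ (Ψ : Set (Matrix (Fin m) (Fin n) ℂ)) := by
      rw [← hrange]; exact ⟨Z, rfl⟩
    obtain ⟨f, -, hf⟩ := Submodule.mem_span_finset.mp hmem
    calc Y.rank = (∑ ψ ∈ Ψ, f ψ • ψ).rank := by rw [hf]
      _ ≤ ∑ ψ ∈ Ψ, (f ψ • ψ).rank := rank_sum_le' _ _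
      _ ≤ ∑ ψ ∈ Ψ, ψ.rank := Finset.sum_le_sum fun ψ _ => rank_smul_le' _ _
      _ = ∑ ψ ∈ Ψ, 1 := Finset.sum_congr rfl fun ψ hψ => hΨ ψ hψ
      _ = Ψ.card := by simp
      _ ≤ r := hcard
  have h1δ : (0:ℝ) ≤ 1 + δ := by linarith
  -- key inner product identity
  have hYY : frobInner Y Y = frobInner Z Y := by
    calc frobInner (P Z) Y = frobInner Z (P Y) := hsym Z Y
      _ = frobInner Z Y := by rw [hY, hidem]
  have hsq : (frobNorm Y ^ 2 : ℝ) = ‖frobInner Y Z‖ := by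
    have h1 : frobInner Z Y = starRingEnd ℂ (frobInner Y Z) := frobInner_conj_symm Z Y
    have h2 : ‖frobInner Y Y‖ = frobNorm Y ^ 2 := by
      rw [frobInner_self, Complex.norm_real, Real.norm_of_nonneg (by positivity)]
    rw [← h2, hYY, h1]
    exact RCLike.norm_conj _
  have hinner : frobInner Y Z = eInner (A Y) (A X) := (hadj Y (A X)).symm
  have hCS : frobNorm Y ^ 2 ≤ eNorm (A Y) * eNorm (A X) := by
    rw [hsq, hinner]; exact eInner_abs_le _ _
  -- RIP bounds
  have hAY : eNorm (A Y) ≤ Real.sqrt (1 + δ) * frobNorm Y := by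
    have := (hA Y hYrank).2
    have h := Real.sqrt_le_sqrt this
    rwa [Real.sqrt_sq (eNorm_nonneg (A Y)), Real.sqrt_mul h1δ,
      Real.sqrt_sq (frobNorm_nonneg Y)] at h
  have hAX : eNorm (A X) ≤ Real.sqrt (1 + δ) * frobNorm X := by
    have := (hA X hX).2
    have h := Real.sqrt_le_sqrt this
    rwa [Real.sqrt_sq (eNorm_nonneg (A X)), Real.sqrt_mul h1δ,
      Real.sqrt_sq (frobNorm_nonneg X)] at h
  have hsqrt : Real.sqrt (1 + δ) * Real.sqrt (1 + δ) = 1 + δ := Real.mul_self_sqrt h1δ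
  have hfinal : frobNorm Y ^ 2 ≤ (1 + δ) * frobNorm Y * frobNorm X := by
    have h := le_trans hCS (mul_le_mul hAY hAX (eNorm_nonneg _)
      (mul_nonneg (Real.sqrt_nonneg _) (frobNorm_nonneg Y)))
    nlinarith [Real.sqrt_nonneg (1+δ), frobNorm_nonneg Y, frobNorm_nonneg X, hsqrt]
  rcases eq_or_lt_of_le (frobNorm_nonneg Y) with h0 | h0
  · rw [← h0]; exact mul_nonneg h1δ (frobNorm_nonneg X)
  · nlinarith
end

section
/- For X, Y real matrices with ⟨X,Y⟩ = 0 and rank(X + αY) ≤ r for all real α, the bound |⟨AX, AY⟩| ≤ δ_r(A)·‖X‖_F·‖Y‖_F holds (i.e., the constant √2 can be dropped in the real case). -/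
open scoped BigOperators Matrix

/-- Trace inner product on real matrices: `⟪X, Y⟫ = tr(Yᵀ X)`. -/
noncomputable def frobInnerR {m n : ℕ} (X Y : Matrix (Fin m) (Fin n) ℝ) : ℝ :=
  (Yᵀ * X).trace

/-- Frobenius norm of a real matrix. -/
noncomputable def frobNormR {m n : ℕ} (X : Matrix (Fin m) (Fin n) ℝ) : ℝ :=
  Real.sqrt (∑ i, ∑ j, (X i j) ^ 2)

/-- Euclidean norm on `ℝ^p`. -/
noncomputable def eNormR {p : ℕ} (v : Fin p → ℝ) : ℝ :=
  Real.sqrt (∑ k, (v k) ^ 2)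

/-- Euclidean inner product on `ℝ^p`. -/
noncomputable def eInnerR {p : ℕ} (u v : Fin p → ℝ) : ℝ :=
  ∑ k, u k * v k

/-- `A` satisfies the rank-`r` restricted isometry inequalities with constant `δ` (real case). -/
def RIPwithR {m n p : ℕ} (A : Matrix (Fin m) (Fin n) ℝ →ₗ[ℝ] (Fin p → ℝ)) (r : ℕ) (δ : ℝ) : Prop :=
  ∀ X : Matrix (Fin m) (Fin n) ℝ, X.rank ≤ r →
    (1 - δ) * frobNormR X ^ 2 ≤ eNormR (A X) ^ 2 ∧ eNormR (A X) ^ 2 ≤ (1 + δ) * frobNormR X ^ 2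

lemma frobNormR_sq {m n : ℕ} (X : Matrix (Fin m) (Fin n) ℝ) :
    frobNormR X ^ 2 = ∑ i, ∑ j, (X i j) ^ 2 := by
  apply Real.sq_sqrt
  positivity

lemma eNormR_sq {p : ℕ} (v : Fin p → ℝ) :
    eNormR v ^ 2 = ∑ k, (v k) ^ 2 := by
  apply Real.sq_sqrt
  positivity

lemma frobNormR_nonneg {m n : ℕ} (X : Matrix (Fin m) (Fin n) ℝ) : 0 ≤ frobNormR X :=
  Real.sqrt_nonneg _

lemma frobInnerR_eq {m n : ℕ} (X Y : Matrix (Fin m) (Fin n) ℝ) :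
    frobInnerR X Y = ∑ i, ∑ j, X i j * Y i j := by
  unfold frobInnerR
  rw [Matrix.trace]
  simp only [Matrix.diag, Matrix.mul_apply, Matrix.transpose_apply]
  rw [Finset.sum_comm]
  congr 1; ext i; congr 1; ext j; ring

lemma frobNormR_add_sq {m n : ℕ} (X Y : Matrix (Fin m) (Fin n) ℝ) :
    frobNormR (X + Y) ^ 2 = frobNormR X ^ 2 + 2 * frobInnerR X Y + frobNormR Y ^ 2 := by
  simp only [frobNormR_sq, frobInnerR_eq, Matrix.add_apply]
  have h : ∀ i j, (X i j + Y i j)^2 = X i j^2 + 2*(X i j * Y i j) + Y i j^2 := by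
    intros; ring
  simp only [h, Finset.sum_add_distrib, Finset.mul_sum]

lemma frobNormR_sub_sq {m n : ℕ} (X Y : Matrix (Fin m) (Fin n) ℝ) :
    frobNormR (X - Y) ^ 2 = frobNormR X ^ 2 - 2 * frobInnerR X Y + frobNormR Y ^ 2 := by
  simp only [frobNormR_sq, frobInnerR_eq, Matrix.sub_apply]
  have h : ∀ i j, (X i j - Y i j)^2 = X i j^2 + (-(2*(X i j * Y i j))) + Y i j^2 := by
    intros; ring
  simp only [h, Finset.sum_add_distrib, Finset.sum_neg_distrib, Finset.mul_sum]
  ring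

lemma eNormR_add_sq {p : ℕ} (u v : Fin p → ℝ) :
    eNormR (u + v) ^ 2 = eNormR u ^ 2 + 2 * eInnerR u v + eNormR v ^ 2 := by
  simp only [eNormR_sq, eInnerR, Pi.add_apply]
  have h : ∀ k, (u k + v k)^2 = u k^2 + 2*(u k * v k) + v k^2 := by intros; ring
  simp only [h, Finset.sum_add_distrib, Finset.mul_sum]

lemma eNormR_sub_sq {p : ℕ} (u v : Fin p → ℝ) :
    eNormR (u - v) ^ 2 = eNormR u ^ 2 - 2 * eInnerR u v + eNormR v ^ 2 := by
  simp only [eNormR_sq, eInnerR, Pi.sub_apply]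
  have h : ∀ k, (u k - v k)^2 = u k^2 + (-(2*(u k * v k))) + v k^2 := by intros; ring
  simp only [h, Finset.sum_add_distrib, Finset.sum_neg_distrib, Finset.mul_sum]
  ring

/-- Core inequality. -/
lemma core {m n p r : ℕ}
    (A : Matrix (Fin m) (Fin n) ℝ →ₗ[ℝ] (Fin p → ℝ))
    (δ : ℝ) (hA : RIPwithR A r δ)
    (X Y : Matrix (Fin m) (Fin n) ℝ)
    (hXY : frobInnerR X Y = 0)
    (h1 : (X + Y).rank ≤ r) (h2 : (X - Y).rank ≤ r) :
    |eInnerR (A X) (A Y)| ≤ δ / 2 * (frobNormR X ^ 2 + frobNormR Y ^ 2) := by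
  have hp := hA (X + Y) h1
  have hm := hA (X - Y) h2
  have e1 : eNormR (A (X + Y)) ^ 2
      = eNormR (A X) ^ 2 + 2 * eInnerR (A X) (A Y) + eNormR (A Y) ^ 2 := by
    rw [map_add]; exact eNormR_add_sq _ _
  have e2 : eNormR (A (X - Y)) ^ 2
      = eNormR (A X) ^ 2 - 2 * eInnerR (A X) (A Y) + eNormR (A Y) ^ 2 := by
    rw [map_sub]; exact eNormR_sub_sq _ _
  have n1 : frobNormR (X + Y) ^ 2 = frobNormR X ^ 2 + frobNormR Y ^ 2 := by
    rw [frobNormR_add_sq, hXY]; ring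
  have n2 : frobNormR (X - Y) ^ 2 = frobNormR X ^ 2 + frobNormR Y ^ 2 := by
    rw [frobNormR_sub_sq, hXY]; ring
  rw [n1] at hp; rw [n2] at hm
  rw [abs_le]
  constructor <;> nlinarith [hp.1, hp.2, hm.1, hm.2]

/-- Real rank-restricted orthogonality property, without the `√2` factor:
if `⟪X,Y⟫ = 0` and `rank (X + α • Y) ≤ r` for all real `α`, then
`|⟨A X, A Y⟩| ≤ δ_r(A) ‖X‖_F ‖Y‖_F`. -/
theorem rank_restricted_orthogonality_real {m n p r : ℕ}
    (A : Matrix (Fin m) (Fin n) ℝ →ₗ[ℝ] (Fin p → ℝ))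
    (δ : ℝ) (hδ0 : 0 ≤ δ) (hA : RIPwithR A r δ)
    (X Y : Matrix (Fin m) (Fin n) ℝ)
    (hXY : frobInnerR X Y = 0)
    (hrank : ∀ α : ℝ, (X + α • Y).rank ≤ r) :
    |eInnerR (A X) (A Y)| ≤ δ * frobNormR X * frobNormR Y := by
  by_cases hX : frobNormR X = 0
  · have : (∑ i, ∑ j, (X i j) ^ 2) = 0 := by
      have := frobNormR_sq X; rw [hX] at this; linarith [this]
    have hX0 : X = 0 := by
      ext i j
      have h1 : ∀ i ∈ (Finset.univ : Finset (Fin m)), (0:ℝ) ≤ ∑ j, (X i j)^2 := by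
        intros; positivity
      have h2 := (Finset.sum_eq_zero_iff_of_nonneg h1).mp this i (Finset.mem_univ i)
      have h3 : ∀ j ∈ (Finset.univ : Finset (Fin n)), (0:ℝ) ≤ (X i j)^2 := by
        intros; positivity
      have := (Finset.sum_eq_zero_iff_of_nonneg h3).mp h2 j (Finset.mem_univ j)
      simpa [pow_eq_zero_iff] using this
    simp [hX0, eInnerR, hX, frobNormR_nonneg, mul_nonneg, hδ0]
  · by_cases hY : frobNormR Y = 0
    · have : (∑ i, ∑ j, (Y i j) ^ 2) = 0 := by
        have := frobNormR_sq Y; rw [hY] at this; linarith [this]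
      have hY0 : Y = 0 := by
        ext i j
        have h1 : ∀ i ∈ (Finset.univ : Finset (Fin m)), (0:ℝ) ≤ ∑ j, (Y i j)^2 := by
          intros; positivity
        have h2 := (Finset.sum_eq_zero_iff_of_nonneg h1).mp this i (Finset.mem_univ i)
        have h3 : ∀ j ∈ (Finset.univ : Finset (Fin n)), (0:ℝ) ≤ (Y i j)^2 := by
          intros; positivity
        have := (Finset.sum_eq_zero_iff_of_nonneg h3).mp h2 j (Finset.mem_univ j)
        simpa [pow_eq_zero_iff] using this
      simp [hY0, eInnerR, hY, frobNormR_nonneg, mul_nonneg, hδ0]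
    · have hXpos : 0 < frobNormR X := lt_of_le_of_ne (frobNormR_nonneg X) (Ne.symm hX)
      have hYpos : 0 < frobNormR Y := lt_of_le_of_ne (frobNormR_nonneg Y) (Ne.symm hY)
      set c : ℝ := frobNormR X / frobNormR Y with hc
      have hcpos : 0 < c := div_pos hXpos hYpos
      -- apply core to X, c • Y
      have hXY' : frobInnerR X (c • Y) = 0 := by
        rw [frobInnerR_eq] at hXY ⊢
        simp only [Matrix.smul_apply, smul_eq_mul]
        rw [show (∑ i, ∑ j, X i j * (c * Y i j)) = c * ∑ i, ∑ j, X i j * Y i j by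
          rw [Finset.mul_sum]; congr 1; ext i; rw [Finset.mul_sum]; congr 1; ext j; ring]
        rw [hXY]; ring
      have h1 : (X + c • Y).rank ≤ r := hrank c
      have h2 : (X - c • Y).rank ≤ r := by
        have := hrank (-c)
        rwa [neg_smul, ← sub_eq_add_neg] at this
      have hcore := core A δ hA X (c • Y) hXY' h1 h2
      have hAc : A (c • Y) = c • (A Y) := map_smul A c Y
      have hinner : eInnerR (A X) (A (c • Y)) = c * eInnerR (A X) (A Y) := by
        rw [hAc]
        simp only [eInnerR, Pi.smul_apply, smul_eq_mul]
        rw [Finset.mul_sum]; congr 1; ext k; ring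
      have hnormc : frobNormR (c • Y) ^ 2 = c ^ 2 * frobNormR Y ^ 2 := by
        simp only [frobNormR_sq, Matrix.smul_apply, smul_eq_mul]
        rw [Finset.mul_sum]
        congr 1; ext i; rw [Finset.mul_sum]; congr 1; ext j; ring
      rw [hinner, hnormc, abs_mul, abs_of_pos hcpos] at hcore
      have hcY : c * frobNormR Y = frobNormR X := by
        rw [hc]; exact div_mul_cancel₀ _ (ne_of_gt hYpos)
      have key : c * |eInnerR (A X) (A Y)| ≤ δ * frobNormR X ^ 2 := by
        calc c * |eInnerR (A X) (A Y)| ≤ δ / 2 * (frobNormR X ^ 2 + c ^ 2 * frobNormR Y ^ 2) := hcore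
          _ = δ * frobNormR X ^ 2 := by
              have : c ^ 2 * frobNormR Y ^ 2 = frobNormR X ^ 2 := by
                rw [← mul_pow, hcY]
              rw [this]; ring
      have : |eInnerR (A X) (A Y)| ≤ δ * frobNormR X ^ 2 / c := by
        rw [le_div_iff₀ hcpos] at *
        nlinarith [key]
      calc |eInnerR (A X) (A Y)| ≤ δ * frobNormR X ^ 2 / c := this
        _ = δ * frobNormR X * frobNormR Y := by
            rw [hc]; field_simp
end

section
/- Let X be an m×n complex matrix with singular values σ₁ ≥ σ₂ ≥ … (set σ_k = 0 for k > rank(X)). Group the singular values into consecutive blocks of size r, writing X = Σ_{j=0}^J c_j Y_j where c_j is the Frobenius norm of the j-th block and Y_j is the corresponding unit-Frobenius-norm rank-≤r matrix. Then Σ_{j≥1} c_j ≤ ‖X‖_*/√r, where ‖X‖_* is the nuclear norm. -/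
open scoped BigOperators Matrix ComplexOrder

/-- The singular values of a complex matrix (as square roots of the eigenvalues of `Xᴴ X`). -/
noncomputable def singVals {m n : ℕ} (X : Matrix (Fin m) (Fin n) ℂ) : Fin n → ℝ :=
  fun i => Real.sqrt ((Matrix.posSemidef_conjTranspose_mul_self X).1.eigenvalues i)

/-- The nuclear norm: sum of all singular values. -/
noncomputable def nuclearNorm {m n : ℕ} (X : Matrix (Fin m) (Fin n) ℂ) : ℝ :=
  ∑ i, singVals X i

/-- Grouping the decreasingly ordered singular values `σ` of `X` into consecutive
blocks of size `r` (block `j ≥ 1` covers indices `rj+1, …, r(j+1)`, i.e. `0`-indexed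
`Finset.Ico (r*j) (r*(j+1))`), with `c_j` the Frobenius norm of block `j`, we have
`Σ_{j ≥ 1} c_j ≤ ‖X‖_*/√r`. -/
theorem block_norm_sum_le_nuclear {m n r : ℕ} (hr : 1 ≤ r)
    (X : Matrix (Fin m) (Fin n) ℂ) (σ : ℕ → ℝ)
    (hanti : Antitone σ) (hσ0 : ∀ k, 0 ≤ σ k)
    (hzero : ∀ k, n ≤ k → σ k = 0)
    (hσ : ∃ e : Equiv.Perm (Fin n), ∀ i : Fin n, σ (i : ℕ) = singVals X (e i)) :
    ∀ J : ℕ,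
      ∑ j ∈ Finset.Icc 1 J,
          Real.sqrt (∑ k ∈ Finset.Ico (r * j) (r * (j + 1)), σ k ^ 2)
        ≤ nuclearNorm X / Real.sqrt r := by
  obtain ⟨e, he⟩ := hσ
  have hrpos : (0:ℝ) < (r:ℝ) := by exact_mod_cast hr
  have hsr : (0:ℝ) < Real.sqrt r := Real.sqrt_pos.mpr hrpos
  have hnuc : ∑ k ∈ Finset.range n, σ k = nuclearNorm X := by
    rw [← Fin.sum_univ_eq_sum_range]
    simp only [he]
    rw [nuclearNorm]
    exact Equiv.sum_comp e (singVals X)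
  have hpartial : ∀ N, ∑ k ∈ Finset.range N, σ k ≤ nuclearNorm X := by
    intro N
    rcases le_total N n with h | h
    · rw [← hnuc]
      exact Finset.sum_le_sum_of_subset_of_nonneg (Finset.range_subset_range.mpr h)
        (fun i _ _ => hσ0 i)
    · rw [← hnuc, Finset.range_eq_Ico,
        ← Finset.sum_Ico_consecutive _ (Nat.zero_le n) h]
      have : ∑ k ∈ Finset.Ico n N, σ k = 0 :=
        Finset.sum_eq_zero fun k hk => hzero k (Finset.mem_Ico.mp hk).1
      simp [this]
  have hkey : ∀ J, ∑ j ∈ Finset.Icc 1 J,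
      Real.sqrt (∑ k ∈ Finset.Ico (r * j) (r * (j + 1)), σ k ^ 2)
        ≤ (∑ k ∈ Finset.range (r * J), σ k) / Real.sqrt r := by
    intro J
    induction J with
    | zero => simp
    | succ J ih =>
      rw [Finset.sum_Icc_succ_top (by omega : 1 ≤ J + 1)]
      set a := σ (r * (J + 1)) with ha
      have hstep : Real.sqrt (∑ k ∈ Finset.Ico (r * (J + 1)) (r * (J + 1 + 1)), σ k ^ 2)
          ≤ (∑ k ∈ Finset.Ico (r * J) (r * (J + 1)), σ k) / Real.sqrt r := by
        have hcard1 : (Finset.Ico (r * (J + 1)) (r * (J + 1 + 1))).card = r := by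
          rw [Nat.card_Ico]; ring_nf; omega
        have hcard2 : (Finset.Ico (r * J) (r * (J + 1))).card = r := by
          rw [Nat.card_Ico]; ring_nf; omega
        have h1 : ∑ k ∈ Finset.Ico (r * (J + 1)) (r * (J + 1 + 1)), σ k ^ 2
            ≤ (r : ℝ) * a ^ 2 := by
          calc ∑ k ∈ Finset.Ico (r * (J + 1)) (r * (J + 1 + 1)), σ k ^ 2
              ≤ ∑ _k ∈ Finset.Ico (r * (J + 1)) (r * (J + 1 + 1)), a ^ 2 := by
                refine Finset.sum_le_sum fun k hk => ?_
                have hk' : r * (J + 1) ≤ k := (Finset.mem_Ico.mp hk).1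
                exact pow_le_pow_left₀ (hσ0 k) (hanti hk') 2
            _ = (r : ℝ) * a ^ 2 := by
                rw [Finset.sum_const, hcard1, nsmul_eq_mul]
        have h2 : Real.sqrt (∑ k ∈ Finset.Ico (r * (J + 1)) (r * (J + 1 + 1)), σ k ^ 2)
            ≤ Real.sqrt ((r : ℝ) * a ^ 2) := Real.sqrt_le_sqrt h1
        have h3 : Real.sqrt ((r : ℝ) * a ^ 2) = Real.sqrt r * a := by
          rw [Real.sqrt_mul hrpos.le, Real.sqrt_sq (hσ0 _)]
        have h4 : (r : ℝ) * a ≤ ∑ k ∈ Finset.Ico (r * J) (r * (J + 1)), σ k := by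
          calc (r : ℝ) * a = ∑ _k ∈ Finset.Ico (r * J) (r * (J + 1)), a := by
                rw [Finset.sum_const, hcard2, nsmul_eq_mul]
            _ ≤ ∑ k ∈ Finset.Ico (r * J) (r * (J + 1)), σ k := by
                refine Finset.sum_le_sum fun k hk => ?_
                exact hanti (le_of_lt (Finset.mem_Ico.mp hk).2)
        refine le_trans h2 ?_
        rw [h3, le_div_iff₀ hsr]
        calc Real.sqrt r * a * Real.sqrt r = (r : ℝ) * a := by
              rw [mul_comm (Real.sqrt r * a), ← mul_assoc, Real.mul_self_sqrt hrpos.le]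
          _ ≤ _ := h4
      have hsplit : ∑ k ∈ Finset.range (r * (J + 1)), σ k
          = ∑ k ∈ Finset.range (r * J), σ k
            + ∑ k ∈ Finset.Ico (r * J) (r * (J + 1)), σ k := by
        rw [Finset.range_eq_Ico,
          ← Finset.sum_Ico_consecutive _ (Nat.zero_le _)
            (Nat.mul_le_mul_left r (Nat.le_succ J))]
        rw [Finset.range_eq_Ico]
      rw [hsplit, add_div]
      exact add_le_add ih hstep
  intro J
  refine le_trans (hkey J) ?_
  gcongr
  exact hpartial _
end

section
/- Let rank(X₀) ≤ r, b = A X₀ + ν, and let Ψ̃ be a set of rank-one atoms with |Ψ̃| ≤ 3r. If X̃ minimizes ‖b − AX‖₂ over X ∈ span(Ψ̃), then ‖X₀ − X̃‖_F ≤ √((1+δ₄r)/(1−δ₄r)) ‖P_{Ψ̃}^⊥ X₀‖_F + (1/√(1−δ₃r)) ‖ν‖₂, where δ_k = δ_k(A) is the rank-restricted isometry constant. -/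
open scoped BigOperators Matrix

section AuxScalar

set_option maxHeartbeats 1000000 in
private lemma aux_contra (α β s v x : ℝ) (hβ : 0 < β) (hβα : β ≤ α) (hα1 : α ≤ 1)
    (hs0 : 0 ≤ s) (hs2 : s^2 = α*β) (hsβ : β ≤ s) (hsα : s ≤ α) (hsAM : 2*s ≤ α+β)
    (hx0 : 0 < x) (hv0 : 0 < v) (hE : α*x < (α-s)*v)
    (hD0 : 2*α*(1-β)*x^2 + 2*((2-β)*(s*(x*v))) < (2-β)*(β*(2*(v*x)+x^2))) : False := by
  have hα : 0 < α := lt_of_lt_of_le hβ hβα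
  have hD : 2*(2-β)*(s-β)*v < ((2-β)*β - 2*α*(1-β))*x := by
    nlinarith [hD0, hx0]
  have hK0 : 0 < (2-β)*β - 2*α*(1-β) := by
    nlinarith [hD, hx0, mul_nonneg (mul_nonneg (show (0:ℝ) ≤ 2*(2-β) by linarith) (show (0:ℝ) ≤ s-β by linarith)) hv0.le]
  have hcomb : 2*α*((2-β)*(s-β)) < ((2-β)*β - 2*α*(1-β))*(α-s) := by
    have m1 := mul_lt_mul_of_pos_left hD hα
    have m2 := mul_lt_mul_of_pos_left hE hK0
    by_contra hcon
    push_neg at hcon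
    have m3 := mul_le_mul_of_nonneg_right hcon hv0.le
    nlinarith [m1, m2, m3]
  have hs2c : (2-β)*s^2 = (2-β)*(α*β) := by rw [hs2]
  nlinarith [hcomb, hs2c,
    mul_nonneg (mul_nonneg (show (0:ℝ) ≤ 2-β by linarith) hs0) (show (0:ℝ) ≤ α+β-2*s by linarith),
    mul_nonneg (mul_nonneg (show (0:ℝ) ≤ 2-β by linarith) hs0) (show (0:ℝ) ≤ α-s by linarith),
    mul_nonneg (show (0:ℝ) ≤ 2*α*(1-β) by nlinarith) (show (0:ℝ) ≤ α-s by linarith)]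

set_option maxHeartbeats 1000000 in
private lemma scalar_core (a d v x g α β : ℝ)
    (hβ : 0 < β) (hβα : β ≤ α) (hα1 : α ≤ 1) (hg0 : 0 ≤ g) (hg2 : α*β*g^2 = 2-β)
    (ha : 0 ≤ a) (hx : 0 ≤ x) (hv : 0 ≤ v)
    (h1 : β*(a^2+d^2) ≤ v^2 - x^2 + (2-β)*a^2)
    (h2 : α*d^2 ≤ (v+x)^2) (h4 : x ≤ Real.sqrt (2-β) * a) :
    α*β*(a^2+d^2) ≤ α*(2-β)*a^2 + 2*(α*β*g)*(a*v) + β*v^2 := by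
  have hα : 0 < α := lt_of_lt_of_le hβ hβα
  have hgav : 0 ≤ α*β*g*(a*v) := by positivity
  rcases le_or_gt ((α-β)*v^2) (α*x^2 + 2*(α*β*g)*(a*v)) with hc | hc
  · nlinarith [mul_le_mul_of_nonneg_left h1 hα.le]
  · obtain ⟨s, hs0, hs2⟩ : ∃ s : ℝ, 0 ≤ s ∧ s^2 = α*β :=
      ⟨Real.sqrt (α*β), Real.sqrt_nonneg _, Real.sq_sqrt (by positivity)⟩
    obtain ⟨h₀, hh0, hh2, h4'⟩ : ∃ h₀ : ℝ, 0 ≤ h₀ ∧ h₀^2 = 2-β ∧ x ≤ h₀*a :=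
      ⟨Real.sqrt (2-β), Real.sqrt_nonneg _, Real.sq_sqrt (by linarith), h4⟩
    clear h4
    have hsβ : β ≤ s := by nlinarith [sq_nonneg (s - β)]
    have hsα : s ≤ α := by nlinarith [sq_nonneg (s - α)]
    have hsAM : 2*s ≤ α + β := by nlinarith [sq_nonneg (α-β), sq_nonneg (α+β-2*s), sq_nonneg (α+β+2*s)]
    have hG : α*β*g = s*h₀ := by
      have e1 : (α*β*g)^2 = (s*h₀)^2 := by
        rw [mul_pow s h₀, hs2, hh2]; linear_combination (α*β) * hg2
      calc α*β*g = Real.sqrt ((α*β*g)^2) := (Real.sqrt_sq (by positivity)).symm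
        _ = Real.sqrt ((s*h₀)^2) := by rw [e1]
        _ = s*h₀ := Real.sqrt_sq (mul_nonneg hs0 hh0)
    rw [hG] at hc ⊢
    clear hG hgav hg2 hg0
    have f4 : s*(x*v) ≤ s*h₀*(a*v) := by
      nlinarith [mul_le_mul_of_nonneg_left (mul_le_mul_of_nonneg_right h4' hv) hs0]
    have hE' : α*x^2 + 2*(s*(x*v)) < (α-β)*v^2 := by nlinarith [f4, hc]
    have hs2v : s^2*v^2 = α*β*v^2 := by rw [hs2]
    have hE : α*x < (α-s)*v := by
      by_contra hcon
      push_neg at hcon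
      have f2 : (0:ℝ) ≤ α*x + (α+s)*v := add_nonneg (mul_nonneg hα.le hx) (mul_nonneg (by linarith) hv)
      nlinarith [mul_nonneg (sub_nonneg.2 hcon) f2, hs2v]
    have hv0 : 0 < v := by
      rcases eq_or_lt_of_le hv with h | h
      · exfalso; rw [← h] at hE'; nlinarith [sq_nonneg x]
      · exact h
    have hdd : β*(2*(v*x)+x^2) ≤ 2*α*(1-β)*a^2 + 2*(s*h₀*(a*v)) := by
      by_contra hB
      push_neg at hB
      have hh2a : h₀^2*a^2 = (2-β)*a^2 := by rw [hh2]
      have f2 : x^2 ≤ (2-β)*a^2 := by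
        nlinarith [mul_self_le_mul_self hx h4', hh2a]
      have p1 := mul_le_mul_of_nonneg_left f2 (show (0:ℝ) ≤ 2*α*(1-β) by nlinarith)
      have p2 := mul_le_mul_of_nonneg_left f4 (show (0:ℝ) ≤ 2-β by linarith)
      have p3 := mul_lt_mul_of_pos_left hB (show (0:ℝ) < 2-β by linarith)
      have hD0 : 2*α*(1-β)*x^2 + 2*((2-β)*(s*(x*v))) < (2-β)*(β*(2*(v*x)+x^2)) := by
        nlinarith [p1, p2, p3]
      have hx0 : 0 < x := by
        rcases eq_or_lt_of_le hx with h | h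
        · exfalso; rw [← h] at hD0; nlinarith [mul_pos hv0 hv0]
        · exact h
      exact aux_contra α β s v x hβ hβα hα1 hs0 hs2 hsβ hsα hsAM hx0 hv0 hE hD0
    nlinarith [mul_le_mul_of_nonneg_left h2 hβ.le, hdd]

set_option maxHeartbeats 1000000 in
private lemma scalar_key' (α β C c a d t v w : ℝ)
    (hβ : 0 < β) (hβα : β ≤ α) (hα1 : α ≤ 1)
    (hC0 : 0 ≤ C) (hc0 : 0 ≤ c) (hC2 : β*C^2 = 2-β) (hc2 : α*c^2 = 1)
    (ha : 0 ≤ a) (hd : 0 ≤ d) (ht : 0 ≤ t) (hv : 0 ≤ v) (hw : 0 ≤ w)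
    (h1 : β*(a^2+d^2) ≤ 2*(t*v) - t^2 + w^2)
    (h2 : α*d^2 ≤ t^2) (h3 : w^2 ≤ (2-β)*a^2) (h4 : t ≤ v + w) :
    Real.sqrt (a^2+d^2) ≤ C*a + c*v := by
  have hα : 0 < α := lt_of_lt_of_le hβ hβα
  have hC1 : 1 ≤ C^2 := by nlinarith
  have key : a^2 + d^2 ≤ (C*a + c*v)^2 := by
    rcases le_or_gt t v with hcase | hcase
    · have ht2 : t^2 ≤ v^2 := by nlinarith
      have hd2 : d^2 ≤ c^2*v^2 := by
        have e : c^2*(α*d^2) = d^2 := by linear_combination d^2 * hc2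
        nlinarith [mul_le_mul_of_nonneg_left (le_trans h2 ht2) (sq_nonneg c)]
      nlinarith [mul_nonneg (mul_nonneg hC0 hc0) (mul_nonneg ha hv), sq_nonneg a]
    · have hx : 0 ≤ t - v := by linarith
      have hw' : w ≤ Real.sqrt (2-β) * a := by
        have e1 : w ≤ Real.sqrt ((2-β)*a^2) := by
          rw [← Real.sqrt_sq hw]
          exact Real.sqrt_le_sqrt h3
        rwa [Real.sqrt_mul (by linarith), Real.sqrt_sq ha] at e1
      have h4' : t - v ≤ Real.sqrt (2-β) * a := by linarith
      have h1' : β*(a^2+d^2) ≤ v^2 - (t-v)^2 + (2-β)*a^2 := by nlinarith [h1, h3]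
      have h2' : α*d^2 ≤ (v+(t-v))^2 := by
        have e : (v+(t-v))^2 = t^2 := by ring
        rw [e]; exact h2
      have hg2 : α*β*(C*c)^2 = 2-β := by
        have e : α*β*(C*c)^2 = (β*C^2)*(α*c^2) := by ring
        rw [e, hC2, hc2, mul_one]
      have core := scalar_core a d v (t-v) (C*c) α β hβ hβα hα1 (mul_nonneg hC0 hc0)
        hg2 ha hx hv h1' h2' h4'
      have heq : α*(2-β)*a^2 + 2*(α*β*(C*c))*(a*v) + β*v^2 = α*β*((C*a+c*v)^2) := by
        linear_combination (-(α*a^2))*hC2 + (-(β*v^2))*hc2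
      rw [heq] at core
      exact le_of_mul_le_mul_left (by linarith [core]) (mul_pos hα hβ)
  have hrhs : 0 ≤ C*a + c*v := add_nonneg (mul_nonneg hC0 ha) (mul_nonneg hc0 hv)
  calc Real.sqrt (a^2+d^2) ≤ Real.sqrt ((C*a+c*v)^2) := Real.sqrt_le_sqrt key
    _ = C*a + c*v := Real.sqrt_sq hrhs

end AuxScalar

section AuxTransfer

/-- The identity map to `EuclideanSpace`. -/
noncomputable def toE {p : ℕ} : (Fin p → ℂ) →ₗ[ℂ] EuclideanSpace ℂ (Fin p) :=
  (WithLp.linearEquiv 2 ℂ (Fin p → ℂ)).symm.toLinearMap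

/-- Matrices to `EuclideanSpace` over the product index. -/
noncomputable def toF {m n : ℕ} : Matrix (Fin m) (Fin n) ℂ →ₗ[ℂ] EuclideanSpace ℂ (Fin m × Fin n) where
  toFun X := (WithLp.equiv 2 (Fin m × Fin n → ℂ)).symm (fun q => X q.1 q.2)
  map_add' := by intros; rfl
  map_smul' := by intros; rfl

lemma eNorm_eq {p : ℕ} (v : Fin p → ℂ) : eNorm v = ‖toE v‖ := by
  rw [EuclideanSpace.norm_eq]; rfl

lemma eInner_eq {p : ℕ} (u v : Fin p → ℂ) :
    eInner u v = inner (𝕜 := ℂ) (toE v) (toE u) := by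
  rw [PiLp.inner_apply]; simp only [RCLike.inner_apply']; rfl

lemma frobNorm_eq {m n : ℕ} (X : Matrix (Fin m) (Fin n) ℂ) : frobNorm X = ‖toF X‖ := by
  rw [EuclideanSpace.norm_eq, Fintype.sum_prod_type]; rfl

lemma frobInner_eq {m n : ℕ} (X Y : Matrix (Fin m) (Fin n) ℂ) :
    frobInner X Y = inner (𝕜 := ℂ) (toF Y) (toF X) := by
  rw [PiLp.inner_apply]
  unfold frobInner Matrix.trace
  rw [Fintype.sum_prod_type]
  rw [Finset.sum_comm]
  simp only [Matrix.diag_apply, Matrix.mul_apply, Matrix.conjTranspose_apply]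
  simp only [RCLike.inner_apply']
  rfl

lemma inner_eq_zero_of_min {F : Type*} [NormedAddCommGroup F] [InnerProductSpace ℂ F]
    {x z : F} (h : ∀ c : ℂ, ‖x‖ ≤ ‖x - c • z‖) : inner (𝕜 := ℂ) x z = 0 := by
  by_cases hz : z = 0
  · simp [hz]
  have hz2 : (0:ℝ) < ‖z‖^2 := by
    have := norm_pos_iff.mpr hz
    positivity
  set w : ℂ := inner (𝕜 := ℂ) z x with hw_def
  have hxz : inner (𝕜 := ℂ) x z = (starRingEnd ℂ) w := (inner_conj_symm x z).symm
  set c : ℂ := w / ((‖z‖:ℂ)^2) with hc_def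
  have hkey := h c
  have hns : ‖x - c • z‖^2 = ‖x‖^2 - 2*RCLike.re (inner (𝕜 := ℂ) x (c • z)) + ‖c • z‖^2 :=
    norm_sub_sq (𝕜 := ℂ) x (c • z)
  have hre : RCLike.re (inner (𝕜 := ℂ) x (c • z)) = ‖w‖^2/‖z‖^2 := by
    rw [inner_smul_right]
    rw [hxz, hc_def]
    rw [div_mul_eq_mul_div, RCLike.mul_conj]
    have e4 : (RCLike.re ((((‖w‖:ℂ))^2 / ((‖z‖:ℂ))^2))) = ‖w‖^2/‖z‖^2 := by
      norm_cast
    convert e4 using 3 <;> push_cast <;> ring <;> rfl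
  have hnc : ‖c • z‖^2 = ‖w‖^2/‖z‖^2 := by
    rw [norm_smul, hc_def]
    rw [mul_pow, norm_div, div_pow]
    have h1 : ‖((‖z‖:ℂ)^2)‖ = ‖z‖^2 := by
      rw [norm_pow, Complex.norm_real, Real.norm_eq_abs, abs_of_nonneg (norm_nonneg z)]
    rw [norm_pow] at h1 ⊢
    rw [h1]
    field_simp
  have hsq : ‖x‖^2 ≤ ‖x - c • z‖^2 := by
    have := h c
    nlinarith [norm_nonneg (x - c • z), norm_nonneg x]
  rw [hns, hre, hnc] at hsq
  have hw0 : ‖w‖^2 ≤ 0 := by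
    have h2 : ‖w‖^2/‖z‖^2 ≤ 0 := by linarith
    have h3 : ‖w‖^2 = (‖w‖^2/‖z‖^2)*‖z‖^2 := by field_simp
    nlinarith [mul_nonpos_of_nonpos_of_nonneg h2 (le_of_lt hz2)]
  have : w = 0 := by
    have : ‖w‖ = 0 := by nlinarith [norm_nonneg w]
    exact norm_eq_zero.mp this
  rw [hxz, this, map_zero]

end AuxTransfer

section AuxRank

lemma matRank_smul_le {m n : ℕ} (c : ℂ) (X : Matrix (Fin m) (Fin n) ℂ) :
    (c • X).rank ≤ X.rank := by
  apply Submodule.finrank_mono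
  rintro y ⟨u, rfl⟩
  rw [Matrix.mulVecLin_apply, Matrix.smul_mulVec]
  exact Submodule.smul_mem _ c (LinearMap.mem_range_self _ u)

lemma matRank_add_le {m n : ℕ} (X Y : Matrix (Fin m) (Fin n) ℂ) :
    (X + Y).rank ≤ X.rank + Y.rank := by
  have hle : LinearMap.range (X+Y).mulVecLin
      ≤ LinearMap.range X.mulVecLin ⊔ LinearMap.range Y.mulVecLin := by
    rw [Matrix.mulVecLin_add]
    rintro y ⟨u, rfl⟩
    rw [LinearMap.add_apply]
    exact Submodule.add_mem_sup (LinearMap.mem_range_self _ u) (LinearMap.mem_range_self _ u)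
  exact le_trans (Submodule.finrank_mono hle)
    (Submodule.finrank_add_le_finrank_add_finrank _ _)

lemma matRank_sub_le {m n : ℕ} (X Y : Matrix (Fin m) (Fin n) ℂ) :
    (X - Y).rank ≤ X.rank + Y.rank := by
  have e : X - Y = X + (-1 : ℂ) • Y := by
    rw [neg_one_smul]; abel
  rw [e]
  exact le_trans (matRank_add_le _ _) (add_le_add_right (matRank_smul_le _ _) _)

lemma matRank_sum_le {m n : ℕ} {ι : Type*} (s : Finset ι) (F : ι → Matrix (Fin m) (Fin n) ℂ) :
    (∑ i ∈ s, F i).rank ≤ ∑ i ∈ s, (F i).rank := by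
  classical
  induction s using Finset.induction_on with
  | empty => simp
  | insert _ _ hni ih =>
    rw [Finset.sum_insert hni, Finset.sum_insert hni]
    exact le_trans (matRank_add_le _ _) (add_le_add_right ih _)

lemma rank_le_of_mem_span {m n : ℕ} (Ψ : Finset (Matrix (Fin m) (Fin n) ℂ))
    (hΨ : ∀ ψ ∈ Ψ, ψ.rank = 1) {X : Matrix (Fin m) (Fin n) ℂ}
    (hX : X ∈ Submodule.span ℂ (Ψ : Set (Matrix (Fin m) (Fin n) ℂ))) :
    X.rank ≤ Ψ.card := by
  obtain ⟨f, -, rfl⟩ := Submodule.mem_span_finset.1 hX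
  calc (∑ ψ ∈ Ψ, f ψ • ψ).rank ≤ ∑ ψ ∈ Ψ, (f ψ • ψ).rank := matRank_sum_le _ _
    _ ≤ ∑ ψ ∈ Ψ, 1 := Finset.sum_le_sum (fun ψ hψ =>
        le_trans (matRank_smul_le _ _) (le_of_eq (hΨ ψ hψ)))
    _ = Ψ.card := by simp

end AuxRank

set_option maxHeartbeats 1600000 in
/-- Least-squares estimation lemma. If `rank X₀ ≤ r`, `b = A X₀ + ν`, and `X̃`
minimizes `‖b − A X‖₂` over `X ∈ span Ψ̃` with `|Ψ̃| ≤ 3r`, then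
`‖X₀ − X̃‖_F ≤ √((1+δ₄ᵣ)/(1−δ₄ᵣ)) ‖P_{Ψ̃}^⊥ X₀‖_F + ‖ν‖₂/√(1−δ₃ᵣ)`. -/
theorem estimation_lemma {m n p r : ℕ}
    (A : Matrix (Fin m) (Fin n) ℂ →ₗ[ℂ] (Fin p → ℂ))
    (δ3 δ4 : ℝ) (hδ30 : 0 ≤ δ3) (h34 : δ3 ≤ δ4) (hδ41 : δ4 < 1)
    (hA3 : RIPwith A (3 * r) δ3) (hA4 : RIPwith A (4 * r) δ4)
    (Ψtilde : Finset (Matrix (Fin m) (Fin n) ℂ))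
    (hΨ : ∀ ψ ∈ Ψtilde, ψ.rank = 1) (hcard : Ψtilde.card ≤ 3 * r)
    (Ptilde : Matrix (Fin m) (Fin n) ℂ →ₗ[ℂ] Matrix (Fin m) (Fin n) ℂ)
    (hPtilde : IsOrthProjOn Ptilde (Ψtilde : Set (Matrix (Fin m) (Fin n) ℂ)))
    (X₀ : Matrix (Fin m) (Fin n) ℂ) (hX₀ : X₀.rank ≤ r)
    (ν : Fin p → ℂ) (b : Fin p → ℂ) (hb : b = A X₀ + ν)
    (Xtilde : Matrix (Fin m) (Fin n) ℂ)
    (hmem : Xtilde ∈ Submodule.span ℂ (Ψtilde : Set (Matrix (Fin m) (Fin n) ℂ)))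
    (hmin : ∀ X ∈ Submodule.span ℂ (Ψtilde : Set (Matrix (Fin m) (Fin n) ℂ)),
      eNorm (b - A Xtilde) ≤ eNorm (b - A X)) :
    frobNorm (X₀ - Xtilde)
      ≤ Real.sqrt ((1 + δ4) / (1 - δ4)) * frobNorm (X₀ - Ptilde X₀)
        + (1 / Real.sqrt (1 - δ3)) * eNorm ν := by
  classical
  obtain ⟨hPproj, hPrange, hPsym⟩ := hPtilde
  -- abbreviations
  set W : Matrix (Fin m) (Fin n) ℂ := X₀ - Ptilde X₀ with hW_def
  set D : Matrix (Fin m) (Fin n) ℂ := Ptilde X₀ - Xtilde with hD_def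
  -- memberships in the span S
  have hPX₀ : Ptilde X₀ ∈ Submodule.span ℂ (Ψtilde : Set (Matrix (Fin m) (Fin n) ℂ)) := by
    rw [← hPrange]; exact ⟨X₀, rfl⟩
  have hDmem : D ∈ Submodule.span ℂ (Ψtilde : Set (Matrix (Fin m) (Fin n) ℂ)) :=
    Submodule.sub_mem _ hPX₀ hmem
  -- ranks
  have hr_span : ∀ Z ∈ Submodule.span ℂ (Ψtilde : Set (Matrix (Fin m) (Fin n) ℂ)),
      Matrix.rank Z ≤ 3 * r := fun Z hZ => le_trans (rank_le_of_mem_span Ψtilde hΨ hZ) hcard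
  have hrD : D.rank ≤ 3 * r := hr_span D hDmem
  have hrW : W.rank ≤ 4 * r := by
    have h1 : W.rank ≤ X₀.rank + (Ptilde X₀).rank := by
      rw [hW_def]; exact matRank_sub_le _ _
    have h2 := hr_span _ hPX₀
    omega
  have hrE : (X₀ - Xtilde).rank ≤ 4 * r := by
    have h1 : (X₀ - Xtilde).rank ≤ X₀.rank + Xtilde.rank := matRank_sub_le _ _
    have h2 := hr_span _ hmem
    omega
  -- W is Frobenius-orthogonal to the span
  have hWorthS : ∀ Z ∈ Submodule.span ℂ (Ψtilde : Set (Matrix (Fin m) (Fin n) ℂ)),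
      frobInner W Z = 0 := by
    intro Z hZ
    rw [← hPrange] at hZ
    obtain ⟨Y, rfl⟩ := hZ
    have hPW : Ptilde W = 0 := by
      rw [hW_def, map_sub, hPproj X₀, sub_self]
    have hsym := hPsym W Y
    rw [hPW] at hsym
    rw [← hsym]
    simp [frobInner]
  -- residual orthogonality
  have hρorth : ∀ Z ∈ Submodule.span ℂ (Ψtilde : Set (Matrix (Fin m) (Fin n) ℂ)),
      inner (𝕜 := ℂ) (toE (b - A Xtilde)) (toE (A Z)) = 0 := by
    intro Z hZ
    apply inner_eq_zero_of_min
    intro c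
    have hXc : Xtilde + c • Z ∈ Submodule.span ℂ (Ψtilde : Set (Matrix (Fin m) (Fin n) ℂ)) :=
      Submodule.add_mem _ hmem (Submodule.smul_mem _ _ hZ)
    have h := hmin _ hXc
    rw [eNorm_eq, eNorm_eq] at h
    have e2 : toE (b - A (Xtilde + c • Z)) = toE (b - A Xtilde) - c • toE (A Z) := by
      have e : b - A (Xtilde + c • Z) = (b - A Xtilde) - c • (A Z) := by
        rw [map_add, map_smul]; abel
      rw [e, map_sub, map_smul]
    rw [e2] at h
    exact h
  -- Pythagoras
  have hWD : X₀ - Xtilde = W + D := by rw [hW_def, hD_def]; abel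
  have hWDinner : inner (𝕜 := ℂ) (toF W) (toF D) = (0:ℂ) := by
    have h0 : frobInner W D = 0 := hWorthS D hDmem
    rw [frobInner_eq] at h0
    rw [← inner_conj_symm, h0, map_zero]
  have hPyth : frobNorm (X₀ - Xtilde)^2 = frobNorm W^2 + frobNorm D^2 := by
    rw [hWD, frobNorm_eq, frobNorm_eq, frobNorm_eq, map_add, norm_add_sq (𝕜 := ℂ), hWDinner]
    simp
  -- A-level decomposition
  have hρ : b - A Xtilde = A W + A D + ν := by
    rw [hb]
    have e : A W + A D = A (X₀ - Xtilde) := by rw [hWD, map_add]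
    rw [e, map_sub]
    abel
  -- scalar abbreviations
  have ha0 : 0 ≤ frobNorm W := by rw [frobNorm_eq]; exact norm_nonneg _
  have hd0 : 0 ≤ frobNorm D := by rw [frobNorm_eq]; exact norm_nonneg _
  have ht0 : 0 ≤ eNorm (A D) := by rw [eNorm_eq]; exact norm_nonneg _
  have hv0 : 0 ≤ eNorm ν := by rw [eNorm_eq]; exact norm_nonneg _
  have hw0 : 0 ≤ eNorm (A W) := by rw [eNorm_eq]; exact norm_nonneg _
  -- inner product identities in Euclidean space
  have hADR : inner (𝕜 := ℂ) (toE (A D)) (toE (b - A Xtilde)) = 0 := by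
    rw [← inner_conj_symm, hρorth D hDmem, map_zero]
  have ht2eq : eNorm (A D)^2 =
      - RCLike.re (inner (𝕜 := ℂ) (toE (A D)) (toE ν))
      - RCLike.re (inner (𝕜 := ℂ) (toE (A D)) (toE (A W))) := by
    have e1 : inner (𝕜 := ℂ) (toE (A D)) (toE (b - A Xtilde)) =
        inner (𝕜 := ℂ) (toE (A D)) (toE (A W)) + inner (𝕜 := ℂ) (toE (A D)) (toE (A D))
        + inner (𝕜 := ℂ) (toE (A D)) (toE ν) := by
      rw [hρ, map_add, map_add, inner_add_right, inner_add_right]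
    rw [hADR] at e1
    have e2 : RCLike.re (inner (𝕜 := ℂ) (toE (A D)) (toE (A D))) = ‖toE (A D)‖^2 :=
      inner_self_eq_norm_sq _
    have e3 := congrArg RCLike.re e1
    simp only [map_add, map_zero] at e3
    rw [e2] at e3
    rw [eNorm_eq]
    linarith
  have habs1 : |RCLike.re (inner (𝕜 := ℂ) (toE (A D)) (toE ν))| ≤ eNorm (A D) * eNorm ν := by
    rw [eNorm_eq, eNorm_eq]
    exact le_trans (RCLike.abs_re_le_norm _) (norm_inner_le_norm _ _)
  have habs2 : |RCLike.re (inner (𝕜 := ℂ) (toE (A D)) (toE (A W)))| ≤ eNorm (A D) * eNorm (A W) := by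
    rw [eNorm_eq, eNorm_eq]
    exact le_trans (RCLike.abs_re_le_norm _) (norm_inner_le_norm _ _)
  -- RIP facts
  have h2 : (1 - δ3) * frobNorm D^2 ≤ eNorm (A D)^2 := (hA3 D hrD).1
  have h3 : eNorm (A W)^2 ≤ (1 + δ4) * frobNorm W^2 := (hA4 W hrW).2
  have h1rip : (1 - δ4) * frobNorm (X₀ - Xtilde)^2 ≤ eNorm (A (X₀ - Xtilde))^2 :=
    (hA4 _ hrE).1
  -- expand ‖A(X₀ - X̃)‖²
  have hAEnorm : eNorm (A (X₀ - Xtilde))^2 = eNorm (A W)^2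
      + 2 * RCLike.re (inner (𝕜 := ℂ) (toE (A W)) (toE (A D))) + eNorm (A D)^2 := by
    have e : A (X₀ - Xtilde) = A W + A D := by rw [hWD, map_add]
    rw [e, eNorm_eq, map_add, norm_add_sq (𝕜 := ℂ), eNorm_eq, eNorm_eq]
  have hresym : RCLike.re (inner (𝕜 := ℂ) (toE (A W)) (toE (A D)))
      = RCLike.re (inner (𝕜 := ℂ) (toE (A D)) (toE (A W))) := inner_re_symm _ _
  -- scalar hypotheses
  have h1 : (1 - δ4) * (frobNorm W^2 + frobNorm D^2)
      ≤ 2*(eNorm (A D) * eNorm ν) - eNorm (A D)^2 + eNorm (A W)^2 := by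
    have hs' : RCLike.re (inner (𝕜 := ℂ) (toE (A D)) (toE (A W)))
        ≤ eNorm (A D) * eNorm ν - eNorm (A D)^2 := by
      have := abs_le.1 habs1
      linarith [ht2eq]
    calc (1 - δ4) * (frobNorm W^2 + frobNorm D^2)
        = (1 - δ4) * frobNorm (X₀ - Xtilde)^2 := by rw [hPyth]
      _ ≤ eNorm (A (X₀ - Xtilde))^2 := h1rip
      _ = eNorm (A W)^2 + 2 * RCLike.re (inner (𝕜 := ℂ) (toE (A D)) (toE (A W)))
          + eNorm (A D)^2 := by rw [hAEnorm, hresym]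
      _ ≤ 2*(eNorm (A D) * eNorm ν) - eNorm (A D)^2 + eNorm (A W)^2 := by linarith
  have h4 : eNorm (A D) ≤ eNorm ν + eNorm (A W) := by
    have hsq : eNorm (A D)^2 ≤ eNorm (A D) * eNorm ν + eNorm (A D) * eNorm (A W) := by
      have e1 := abs_le.1 habs1
      have e2 := abs_le.1 habs2
      linarith [ht2eq]
    nlinarith [ht0, hv0, hw0]
  -- constants
  have hβeq : (2 - (1 - δ4)) = 1 + δ4 := by ring
  have hC2 : (1 - δ4) * (Real.sqrt ((1 + δ4) / (1 - δ4)))^2 = 2 - (1 - δ4) := by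
    have hne : (1:ℝ) - δ4 ≠ 0 := by linarith
    rw [Real.sq_sqrt (div_nonneg (by linarith) (by linarith))]
    field_simp
    ring
  have hc2 : (1 - δ3) * (1 / Real.sqrt (1 - δ3))^2 = 1 := by
    have hne : (1:ℝ) - δ3 ≠ 0 := by linarith
    rw [div_pow, one_pow, Real.sq_sqrt (by linarith : (0:ℝ) ≤ 1 - δ3)]
    field_simp
  have h3' : eNorm (A W)^2 ≤ (2 - (1 - δ4)) * frobNorm W^2 := by rw [hβeq]; exact h3
  have final := scalar_key' (1 - δ3) (1 - δ4) (Real.sqrt ((1 + δ4) / (1 - δ4)))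
    (1 / Real.sqrt (1 - δ3)) (frobNorm W) (frobNorm D) (eNorm (A D)) (eNorm ν) (eNorm (A W))
    (by linarith) (by linarith) (by linarith)
    (Real.sqrt_nonneg _) (by positivity) hC2 hc2
    ha0 hd0 ht0 hv0 hw0 h1 h2 h3' h4
  have hfn : frobNorm (X₀ - Xtilde) = Real.sqrt (frobNorm W^2 + frobNorm D^2) := by
    rw [← hPyth, Real.sqrt_sq (by rw [frobNorm_eq]; exact norm_nonneg _)]
  rw [hfn]
  exact final
end

section
/- Let t ≥ 1, r ≥ t, and for j in an index set J with |J| = t let B_j ⊆ ℕ be nonempty disjoint finite sets with Σ_j |B_j| ≤ r, where J ⊆ ℤ₊ and each j ∈ J has B_j ≠ ∅. Then (1/t) Σ_{j∈J} ( 2^{j+1} Σ_{ℓ≥j, ℓ∈J} 2^{−ℓ} |B_ℓ| )^{1/2} ≤ 2√(r/t). -/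
open Finset in
/-- The combinatorial inequality in the iteration-count bound of ADMiRA:
for `t = |J|` nonempty pairwise disjoint bands `B_j`, `j ∈ J`, with
`Σ_j |B_j| ≤ r` and `1 ≤ t ≤ r`,
`(1/t) Σ_{j∈J} √(2^{j+1} Σ_{ℓ∈J, ℓ≥j} 2^{−ℓ} |B_ℓ|) ≤ 2 √(r/t)`. -/
theorem iteration_count_combinatorial (t r : ℕ) (ht : 1 ≤ t) (htr : t ≤ r)
    (J : Finset ℕ) (hJ : J.card = t)
    (B : ℕ → Finset ℕ)
    (hne : ∀ j ∈ J, (B j).Nonempty)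
    (hdisj : (J : Set ℕ).Pairwise fun a b => Disjoint (B a) (B b))
    (hsum : ∑ j ∈ J, (B j).card ≤ r) :
    (1 / (t : ℝ)) * ∑ j ∈ J,
        Real.sqrt ((2 : ℝ) ^ (j + 1) *
          ∑ ℓ ∈ J.filter (fun ℓ => j ≤ ℓ), (2 : ℝ) ^ (-(ℓ : ℤ)) * (B ℓ).card)
      ≤ 2 * Real.sqrt ((r : ℝ) / t) := by
  set a : ℕ → ℝ := fun j => (2 : ℝ) ^ (j + 1) *
      ∑ ℓ ∈ J.filter (fun ℓ => j ≤ ℓ), (2 : ℝ) ^ (-(ℓ : ℤ)) * (B ℓ).card with ha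
  have ha0 : ∀ j, 0 ≤ a j := by
    intro j
    apply mul_nonneg (by positivity)
    apply Finset.sum_nonneg
    intro ℓ _
    positivity
  have ht' : (0 : ℝ) < t := by exact_mod_cast ht
  -- key bound: ∑ a j ≤ 4 * r
  have hS : ∑ j ∈ J, a j ≤ 4 * (r : ℝ) := by
    have hswap : ∑ j ∈ J, a j
        = ∑ ℓ ∈ J, ((2 : ℝ) ^ (-(ℓ : ℤ)) * (B ℓ).card) *
            ∑ j ∈ J.filter (fun j => j ≤ ℓ), (2 : ℝ) ^ (j + 1) := by
      simp only [ha, Finset.mul_sum, Finset.sum_filter]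
      rw [Finset.sum_comm]
      refine Finset.sum_congr rfl fun ℓ _ => Finset.sum_congr rfl fun j _ => ?_
      by_cases h : j ≤ ℓ <;> simp [h] <;> ring
    rw [hswap]
    have hbound : ∀ ℓ ∈ J, ((2 : ℝ) ^ (-(ℓ : ℤ)) * (B ℓ).card) *
        ∑ j ∈ J.filter (fun j => j ≤ ℓ), (2 : ℝ) ^ (j + 1)
        ≤ 4 * (B ℓ).card := by
      intro ℓ _
      have hsub : J.filter (fun j => j ≤ ℓ) ⊆ Finset.range (ℓ + 1) := by
        intro j hj
        simp only [Finset.mem_filter] at hj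
        exact Finset.mem_range.mpr (Nat.lt_succ_of_le hj.2)
      have h1 : ∑ j ∈ J.filter (fun j => j ≤ ℓ), (2 : ℝ) ^ (j + 1)
          ≤ ∑ j ∈ Finset.range (ℓ + 1), (2 : ℝ) ^ (j + 1) :=
        Finset.sum_le_sum_of_subset_of_nonneg hsub (fun i _ _ => by positivity)
      have h2 : ∑ j ∈ Finset.range (ℓ + 1), (2 : ℝ) ^ (j + 1) ≤ (2 : ℝ) ^ (ℓ + 2) := by
        have : ∑ j ∈ Finset.range (ℓ + 1), (2 : ℝ) ^ (j + 1)
            = 2 * ∑ j ∈ Finset.range (ℓ + 1), (2 : ℝ) ^ j := by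
          rw [Finset.mul_sum]; congr 1; ext j; ring
        rw [this, geom_sum_eq (by norm_num : (2:ℝ) ≠ 1)]
        have hp : (0:ℝ) < 2 ^ (ℓ + 1) := by positivity
        rw [show ((2:ℝ) - 1) = 1 by norm_num, div_one,
          show (2:ℝ) ^ (ℓ + 2) = 2 * 2 ^ (ℓ + 1) by ring]
        linarith
      calc ((2 : ℝ) ^ (-(ℓ : ℤ)) * (B ℓ).card) *
            ∑ j ∈ J.filter (fun j => j ≤ ℓ), (2 : ℝ) ^ (j + 1)
          ≤ ((2 : ℝ) ^ (-(ℓ : ℤ)) * (B ℓ).card) * (2 : ℝ) ^ (ℓ + 2) := by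
            apply mul_le_mul_of_nonneg_left (h1.trans h2) (by positivity)
        _ = 4 * (B ℓ).card := by
            have key : (2 : ℝ) ^ (-(ℓ : ℤ)) * (2 : ℝ) ^ (ℓ + 2) = 4 := by
              rw [← zpow_natCast (2:ℝ) (ℓ + 2),
                ← zpow_add₀ (by norm_num : (2:ℝ) ≠ 0)]
              have : (-(ℓ:ℤ) + ((ℓ : ℕ) + 2 : ℕ)) = 2 := by push_cast; ring
              rw [this]; norm_num
            rw [mul_right_comm, key]
    calc ∑ ℓ ∈ J, ((2 : ℝ) ^ (-(ℓ : ℤ)) * (B ℓ).card) *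
          ∑ j ∈ J.filter (fun j => j ≤ ℓ), (2 : ℝ) ^ (j + 1)
        ≤ ∑ ℓ ∈ J, 4 * ((B ℓ).card : ℝ) := Finset.sum_le_sum hbound
      _ = 4 * ∑ ℓ ∈ J, ((B ℓ).card : ℝ) := by rw [Finset.mul_sum]
      _ ≤ 4 * (r : ℝ) := by
          have : (∑ ℓ ∈ J, ((B ℓ).card : ℝ)) ≤ (r : ℝ) := by
            exact_mod_cast hsum
          linarith
  -- Cauchy-Schwarz / Jensen
  have hCS : (∑ j ∈ J, Real.sqrt (a j)) ^ 2 ≤ (t : ℝ) * ∑ j ∈ J, a j := by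
    have := Finset.sum_mul_sq_le_sq_mul_sq J (fun _ => (1 : ℝ)) (fun j => Real.sqrt (a j))
    simp only [one_mul, one_pow] at this
    calc (∑ j ∈ J, Real.sqrt (a j)) ^ 2
        ≤ (∑ _j ∈ J, (1:ℝ)) * ∑ j ∈ J, Real.sqrt (a j) ^ 2 := this
      _ = (t : ℝ) * ∑ j ∈ J, a j := by
          rw [Finset.sum_const, hJ]
          congr 1
          · simp
          · exact Finset.sum_congr rfl fun j _ => Real.sq_sqrt (ha0 j)
  have hsumsqrt : ∑ j ∈ J, Real.sqrt (a j) ≤ Real.sqrt ((t : ℝ) * (4 * r)) := by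
    rw [← Real.sqrt_sq (Finset.sum_nonneg fun j _ => Real.sqrt_nonneg _)]
    apply Real.sqrt_le_sqrt
    calc (∑ j ∈ J, Real.sqrt (a j)) ^ 2 ≤ (t : ℝ) * ∑ j ∈ J, a j := hCS
      _ ≤ (t : ℝ) * (4 * r) := by
          apply mul_le_mul_of_nonneg_left hS (le_of_lt ht')
  have hfin : (1 / (t : ℝ)) * Real.sqrt ((t : ℝ) * (4 * r)) = 2 * Real.sqrt ((r : ℝ) / t) := by
    have h4 : (t:ℝ) * (4 * r) = (4 * ((r:ℝ)/t)) * (t:ℝ)^2 := by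
      field_simp
    rw [h4, Real.sqrt_mul (by positivity) ((t:ℝ)^2), Real.sqrt_sq (le_of_lt ht'),
      Real.sqrt_mul (by norm_num : (0:ℝ) ≤ 4),
      show Real.sqrt 4 = 2 by
        rw [show (4:ℝ) = 2^2 by norm_num, Real.sqrt_sq (by norm_num : (0:ℝ) ≤ 2)]]
    field_simp
  calc (1 / (t : ℝ)) * ∑ j ∈ J, Real.sqrt (a j)
      ≤ (1 / (t : ℝ)) * Real.sqrt ((t : ℝ) * (4 * r)) := by
        exact mul_le_mul_of_nonneg_left hsumsqrt (by positivity)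
    _ = 2 * Real.sqrt ((r : ℝ) / t) := hfin
end
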